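/- Let L_n be differentiable and (γ/2)-strongly convex on the set of vectors supported on I_S within radius r of β*, in the sense that L_n(β*) + ⟨∇L_n(β*), β − β*⟩ + (γ/4)‖β − β*‖₂² ≤ L_n(β) for all such β. If β̂ minimizes L_n over this set, then ‖β̂ − β*‖₂ ≤ (4√k/γ)·‖(∇L_n(β*))_{I_S}‖_∞, where k = |I_S|. -/

import Mathlib

open scoped BigOperators RealInnerProductSpace

/-- If `L` is `(γ/2)`-strongly convex on vectors supported on `I_S` within radius `r`
of `β*` (in the sense of the first-order lower bound with curvature `γ/4`), and `β̂`
minimizes `L` over this set, then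
`‖β̂ − β*‖₂ ≤ (4√k/γ)·max_{i ∈ I_S}|(∇L(β*))_i|`, where `k = |I_S|`. -/
theorem restricted_minimizer_error_bound
    (p : ℕ) (L : EuclideanSpace ℝ (Fin p) → ℝ) (hL : Differentiable ℝ L)
    (γ r : ℝ) (hγ : 0 < γ) (hr : 0 < r)
    (IS : Finset (Fin p)) (hIS : IS.Nonempty) (k : ℕ) (hk : IS.card = k)
    (βstar : EuclideanSpace ℝ (Fin p))
    (hβstar : ∀ i ∉ IS, βstar i = 0)
    (hSC : ∀ β : EuclideanSpace ℝ (Fin p), (∀ i ∉ IS, β i = 0) → ‖β - βstar‖ ≤ r →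
      L βstar + ⟪gradient L βstar, β - βstar⟫ + γ / 4 * ‖β - βstar‖ ^ 2 ≤ L β)
    (βhat : EuclideanSpace ℝ (Fin p))
    (hβhat_supp : ∀ i ∉ IS, βhat i = 0) (hβhat_ball : ‖βhat - βstar‖ ≤ r)
    (hmin : ∀ β : EuclideanSpace ℝ (Fin p), (∀ i ∉ IS, β i = 0) → ‖β - βstar‖ ≤ r →
      L βhat ≤ L β) :
    ‖βhat - βstar‖ ≤ 4 * Real.sqrt k / γ * IS.sup' hIS (fun i => |gradient L βstar i|) := by
  set g := gradient L βstar with hg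
  set v := βhat - βstar with hv
  set M := IS.sup' hIS (fun i => |g i|) with hM
  obtain ⟨i0, hi0⟩ := hIS
  have hM0 : 0 ≤ M := le_trans (abs_nonneg (g i0)) (Finset.le_sup' (fun i => |g i|) hi0)
  have hvsupp : ∀ i ∉ IS, v i = 0 := by
    intro i hi
    simp [hv, hβstar i hi, hβhat_supp i hi]
  -- strong convexity + minimality
  have h1 : γ / 4 * ‖v‖ ^ 2 ≤ -⟪g, v⟫ := by
    have hsc := hSC βhat hβhat_supp hβhat_ball
    have hm := hmin βstar hβstar (by simp [hr.le])
    linarith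
  -- inner product bound
  have h2 : -⟪g, v⟫ ≤ M * ∑ i ∈ IS, |v i| := by
    have hinner : ⟪g, v⟫ = ∑ i ∈ IS, g i * v i := by
      rw [PiLp.inner_apply]
      rw [← Finset.sum_subset (Finset.subset_univ IS)]
      · simp [RCLike.inner_apply, mul_comm]
      · intro i _ hi
        simp [hvsupp i hi, RCLike.inner_apply]
    calc -⟪g, v⟫ ≤ |∑ i ∈ IS, g i * v i| := by rw [hinner]; exact neg_le_abs _
      _ ≤ ∑ i ∈ IS, |g i * v i| := Finset.abs_sum_le_sum_abs _ _
      _ ≤ ∑ i ∈ IS, M * |v i| := by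
          refine Finset.sum_le_sum fun i hi => ?_
          rw [abs_mul]
          exact mul_le_mul_of_nonneg_right (Finset.le_sup' (fun i => |g i|) hi) (abs_nonneg _)
      _ = M * ∑ i ∈ IS, |v i| := by rw [Finset.mul_sum]
  -- Cauchy-Schwarz: ∑ |v i| ≤ √k ‖v‖
  have h3 : ∑ i ∈ IS, |v i| ≤ Real.sqrt k * ‖v‖ := by
    have hnorm : ‖v‖ ^ 2 = ∑ i, (v i) ^ 2 := by
      rw [EuclideanSpace.norm_eq, Real.sq_sqrt (by positivity)]
      exact Finset.sum_congr rfl fun i _ => sq_abs (v i)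
    have hcs : (∑ i ∈ IS, |v i|) ^ 2 ≤ k * ‖v‖ ^ 2 := by
      calc (∑ i ∈ IS, |v i|) ^ 2 ≤ IS.card * ∑ i ∈ IS, |v i| ^ 2 :=
            sq_sum_le_card_mul_sum_sq
        _ ≤ k * ‖v‖ ^ 2 := by
            rw [hk, hnorm]
            refine mul_le_mul_of_nonneg_left ?_ (Nat.cast_nonneg k)
            calc ∑ i ∈ IS, |v i| ^ 2 = ∑ i ∈ IS, (v i) ^ 2 :=
                  Finset.sum_congr rfl fun i _ => sq_abs (v i)
              _ ≤ ∑ i, (v i) ^ 2 := Finset.sum_le_sum_of_subset_of_nonneg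
                  (Finset.subset_univ IS) (fun i _ _ => sq_nonneg _)
    nlinarith [Finset.sum_nonneg (fun i (_ : i ∈ IS) => abs_nonneg (v i)),
      Real.sq_sqrt (Nat.cast_nonneg k : (0:ℝ) ≤ k), Real.sqrt_nonneg (k:ℝ),
      norm_nonneg v, mul_nonneg (Real.sqrt_nonneg (k:ℝ)) (norm_nonneg v)]
  have hkey : γ / 4 * ‖v‖ ^ 2 ≤ M * (Real.sqrt k * ‖v‖) :=
    h1.trans (h2.trans (mul_le_mul_of_nonneg_left h3 hM0))
  rcases eq_or_lt_of_le (norm_nonneg v) with h0 | h0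
  · rw [← h0]
    positivity
  · rw [div_mul_eq_mul_div, le_div_iff₀ hγ]
    nlinarith [Real.sqrt_nonneg (k : ℝ)]
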